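/- For any (z₁, z₂, ż₁, ż₂) with ż₁ ≠ 0, the point (x, y, θ) = ((ż₂/ż₁) cos z₁ + z₂ sin z₁, (ż₂/ż₁) sin z₁ − z₂ cos z₁, z₁), together with velocities obtained by formally differentiating these expressions (i.e. θ̇ = ż₁, ẋ and ẏ the corresponding derivatives), satisfies the implicit car equation ẋ sin θ − ẏ cos θ = 0. -/
import Mathlib

/-- The image of the third chart inverse `φ₃`, with velocities obtained by formal
differentiation (for arbitrary values of `zdd₁, zdd₂`), satisfies the implicit car
equation `ẋ sin θ − ẏ cos θ = 0`. -/
theorem car_chart3_maps_into_zero_set (z₁ z₂ zd₁ zd₂ zdd₁ zdd₂ : ℝ) (h : zd₁ ≠ 0) :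
    (((zdd₂ * zd₁ - zd₂ * zdd₁) / zd₁ ^ 2) * Real.cos z₁ - (zd₂ / zd₁) * Real.sin z₁ * zd₁
        + zd₂ * Real.sin z₁ + z₂ * Real.cos z₁ * zd₁) * Real.sin z₁ -
      (((zdd₂ * zd₁ - zd₂ * zdd₁) / zd₁ ^ 2) * Real.sin z₁ + (zd₂ / zd₁) * Real.cos z₁ * zd₁
        - zd₂ * Real.cos z₁ + z₂ * Real.sin z₁ * zd₁) * Real.cos z₁ = 0 := by
  have hs := Real.sin_sq_add_cos_sq z₁
  field_simp
  nlinarith [hs]
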